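/- Let α > 0 and let β be a coefficient array. Let (λ_n)_{n≥1} be a nondecreasing sequence of positive reals with λ_n ≤ n, λ_{2n} ≤ 2 λ_n for all n ≥ 1, and λ_n / n → 0 as n → ∞; for each n ≥ 1 let j₀(n) be the unique natural number with 2^{j₀(n)} ≤ n/λ_n < 2^{j₀(n)+1}. Then sup_{n≥1} (n/λ_n)^{2α/(1+2α)} · Σ_{j ≥ j₀(n)} Σ_{k=0}^{2^j−1} β_{j,k}² < ∞ if and only if sup_{J∈ℕ} 2^{2Jα/(1+2α)} · Σ_{j ≥ J} Σ_{k=0}^{2^j−1} β_{j,k}² < ∞. -/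

import Mathlib

open scoped BigOperators

/-- A coefficient array `β` is square-summable if `Σ_{j,k} β_{j,k}² < ∞`. -/
def SqSummable (β : ℕ → ℕ → ℝ) : Prop :=
  Summable fun j : ℕ => ∑ k ∈ Finset.range (2 ^ j), (β j k) ^ 2

/-- The condition `B^{α/(1+2α)}_{2,∞}`. -/
def CondB2 (β : ℕ → ℕ → ℝ) (α : ℝ) : Prop :=
  ∃ C : ℝ, ∀ J : ℕ,
    (2 : ℝ) ^ (2 * (J : ℝ) * α / (1 + 2 * α)) *
      ∑' j : ℕ, (if J ≤ j then ∑ k ∈ Finset.range (2 ^ j), (β j k) ^ 2 else 0) ≤ C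

/-- Discrete intermediate value: a `ℕ`-valued sequence starting below `J`,
increasing by at most one at each step, that reaches `J`, attains `J`. -/
lemma stmt6_aux_ivt (h : ℕ → ℕ) (J : ℕ) (h0 : h 0 ≤ J)
    (hstep : ∀ m, h (m + 1) ≤ h m + 1) : ∀ m, J ≤ h m → ∃ m', h m' = J := by
  intro m
  induction m with
  | zero => exact fun hm => ⟨0, le_antisymm h0 hm⟩
  | succ m ih =>
    intro hm
    by_cases hc : J ≤ h m
    · exact ih hc
    · push_neg at hc
      have := hstep m
      exact ⟨m + 1, by omega⟩

/-- identification of the linear approximation space `L^α_V` with the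
Besov space `B^{α/(1+2α)}_{2,∞}`. -/
theorem stmt_6 (α : ℝ) (hα : 0 < α) (β : ℕ → ℕ → ℝ) (hβ : SqSummable β)
    (lam : ℕ → ℝ) (hpos : ∀ n : ℕ, 1 ≤ n → 0 < lam n)
    (hle : ∀ n : ℕ, 1 ≤ n → lam n ≤ n)
    (hmono : Monotone lam)
    (hdouble : ∀ n : ℕ, 1 ≤ n → lam (2 * n) ≤ 2 * lam n)
    (hlim : Filter.Tendsto (fun n : ℕ => lam n / n) Filter.atTop (nhds 0))
    (j₀ : ℕ → ℕ)
    (hj₀ : ∀ n : ℕ, 1 ≤ n →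
      (2 : ℝ) ^ (j₀ n) ≤ (n : ℝ) / lam n ∧ (n : ℝ) / lam n < 2 ^ (j₀ n + 1)) :
    (∃ C : ℝ, ∀ n : ℕ, 1 ≤ n →
        ((n : ℝ) / lam n) ^ (2 * α / (1 + 2 * α)) *
          ∑' j : ℕ,
            (if j₀ n ≤ j then ∑ k ∈ Finset.range (2 ^ j), (β j k) ^ 2 else 0) ≤ C) ↔
      CondB2 β α := by
  classical
  have hd : (0 : ℝ) < 1 + 2 * α := by linarith
  set γ : ℝ := 2 * α / (1 + 2 * α) with hγdef
  have hγ : 0 < γ := by positivity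
  set s : ℕ → ℝ := fun j => ∑ k ∈ Finset.range (2 ^ j), (β j k) ^ 2 with hs
  have hs0 : ∀ j, 0 ≤ s j := fun j => Finset.sum_nonneg fun k _ => sq_nonneg _
  have hsumS : Summable s := hβ
  have hsum : ∀ J : ℕ, Summable (fun j => if J ≤ j then s j else 0) := by
    intro J
    refine Summable.of_nonneg_of_le (fun j => ?_) (fun j => ?_) hsumS
    · split <;> simp [hs0 j]
    · split <;> simp [hs0 j]
  set T : ℕ → ℝ := fun J => ∑' j : ℕ, (if J ≤ j then s j else 0) with hT
  have hT0 : ∀ J, 0 ≤ T J := by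
    intro J
    exact tsum_nonneg fun j => by split <;> simp [hs0 j]
  have hTanti : ∀ J J' : ℕ, J ≤ J' → T J' ≤ T J := by
    intro J J' hJJ
    refine Summable.tsum_le_tsum (fun j => ?_) (hsum J') (hsum J)
    by_cases h1 : J' ≤ j
    · simp [h1, le_trans hJJ h1]
    · simp only [h1, if_false]
      split <;> simp [hs0 j]
  -- exponent rewriting
  have hexp : ∀ J : ℕ, (2 : ℝ) ^ (2 * (J : ℝ) * α / (1 + 2 * α)) = ((2 : ℝ) ^ J) ^ γ := by
    intro J
    have : 2 * (J : ℝ) * α / (1 + 2 * α) = (J : ℝ) * γ := by rw [hγdef]; ring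
    rw [this, Real.rpow_mul (by norm_num : (0:ℝ) ≤ 2), Real.rpow_natCast]
  -- basic facts about f n = n / lam n
  set f : ℕ → ℝ := fun n => (n : ℝ) / lam n with hf
  have hfpos : ∀ n : ℕ, 1 ≤ n → 0 < f n := by
    intro n hn
    have : (0 : ℝ) < (n : ℝ) := by exact_mod_cast hn
    exact div_pos this (hpos n hn)
  constructor
  · -- forward direction
    rintro ⟨C, hC⟩
    -- g m := j₀ (2 ^ m)
    set g : ℕ → ℕ := fun m => j₀ (2 ^ m) with hg
    have h2pow : ∀ m : ℕ, 1 ≤ 2 ^ m := fun m => Nat.one_le_two_pow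
    -- f is monotone along doubling and at most doubles
    have hfd1 : ∀ n : ℕ, 1 ≤ n → f n ≤ f (2 * n) := by
      intro n hn
      have hln : 0 < lam n := hpos n hn
      have hl2n : 0 < lam (2 * n) := hpos (2 * n) (by omega)
      have hcast : ((2 * n : ℕ) : ℝ) = 2 * (n : ℝ) := by push_cast; ring
      rw [hf]
      simp only [hcast]
      rw [div_le_div_iff₀ hln hl2n]
      have := hdouble n hn
      have hn0 : (0 : ℝ) ≤ (n : ℝ) := Nat.cast_nonneg n
      nlinarith
    have hfd2 : ∀ n : ℕ, 1 ≤ n → f (2 * n) ≤ 2 * f n := by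
      intro n hn
      have hln : 0 < lam n := hpos n hn
      have hl2n : 0 < lam (2 * n) := hpos (2 * n) (by omega)
      have hll : lam n ≤ lam (2 * n) := hmono (by omega)
      have hcast : ((2 * n : ℕ) : ℝ) = 2 * (n : ℝ) := by push_cast; ring
      rw [hf]
      simp only [hcast]
      rw [div_le_iff₀ hl2n]
      have hn0 : (0 : ℝ) ≤ (n : ℝ) := Nat.cast_nonneg n
      have : 2 * f n = 2 * (n : ℝ) / lam n := by rw [hf]; ring
      rw [this, div_mul_eq_mul_div, le_div_iff₀ hln]
      nlinarith
    -- g increases by at most one at each step and is nondecreasing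
    have hgstep : ∀ m, g (m + 1) ≤ g m + 1 := by
      intro m
      have h1 := hj₀ (2 ^ m) (h2pow m)
      have h2 := hj₀ (2 ^ (m + 1)) (h2pow (m + 1))
      have hpoweq : 2 ^ (m + 1) = 2 * 2 ^ m := by ring
      have hchain : (2 : ℝ) ^ (g (m + 1)) < 2 ^ (g m + 2) := by
        calc (2 : ℝ) ^ (g (m + 1)) ≤ f (2 ^ (m + 1)) := h2.1
          _ = f (2 * 2 ^ m) := by rw [hpoweq]
          _ ≤ 2 * f (2 ^ m) := hfd2 (2 ^ m) (h2pow m)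
          _ < 2 * 2 ^ (g m + 1) := by
              have := h1.2
              linarith
          _ = 2 ^ (g m + 2) := by ring
      have := (pow_lt_pow_iff_right₀ (by norm_num : (1:ℝ) < 2)).mp hchain
      omega
    have hgmono : ∀ m, g m ≤ g (m + 1) := by
      intro m
      have h1 := hj₀ (2 ^ m) (h2pow m)
      have h2 := hj₀ (2 ^ (m + 1)) (h2pow (m + 1))
      have hpoweq : 2 ^ (m + 1) = 2 * 2 ^ m := by ring
      have hchain : (2 : ℝ) ^ (g m) < 2 ^ (g (m + 1) + 1) := by
        calc (2 : ℝ) ^ (g m) ≤ f (2 ^ m) := h1.1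
          _ ≤ f (2 * 2 ^ m) := hfd1 (2 ^ m) (h2pow m)
          _ = f (2 ^ (m + 1)) := by rw [hpoweq]
          _ < 2 ^ (g (m + 1) + 1) := h2.2
      have := (pow_lt_pow_iff_right₀ (by norm_num : (1:ℝ) < 2)).mp hchain
      omega
    -- f (2^m) → ∞
    have hfinf : Filter.Tendsto (fun m : ℕ => f (2 ^ m)) Filter.atTop Filter.atTop := by
      have hinv : Filter.Tendsto (fun n : ℕ => lam n / n)
          Filter.atTop (nhdsWithin 0 (Set.Ioi 0)) := by
        refine tendsto_nhdsWithin_of_tendsto_nhds_of_eventually_within _ hlim ?_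
        filter_upwards [Filter.eventually_ge_atTop 1] with n hn
        have : (0 : ℝ) < (n : ℝ) := by exact_mod_cast hn
        exact div_pos (hpos n hn) this
      have hinv2 : Filter.Tendsto (fun n : ℕ => ((lam n / n)⁻¹)) Filter.atTop Filter.atTop :=
        hinv.inv_tendsto_nhdsGT_zero
      have heq : ∀ᶠ n in Filter.atTop, (lam n / (n : ℝ))⁻¹ = f n := by
        filter_upwards [Filter.eventually_ge_atTop 1] with n hn
        rw [hf, inv_div]
      have hfinf' : Filter.Tendsto f Filter.atTop Filter.atTop :=
        Filter.Tendsto.congr' heq hinv2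
      exact hfinf'.comp (tendsto_pow_atTop_atTop_of_one_lt (by norm_num : 1 < 2))
    -- hence for each J there is m with J ≤ g m
    have hreach : ∀ J : ℕ, ∃ m, J ≤ g m := by
      intro J
      have := (hfinf.eventually_ge_atTop ((2 : ℝ) ^ (J + 1))).exists
      obtain ⟨m, hm⟩ := this
      refine ⟨m, ?_⟩
      have h2 := hj₀ (2 ^ m) (h2pow m)
      have hchain : (2 : ℝ) ^ (J + 1) < 2 ^ (g m + 1) := lt_of_le_of_lt hm h2.2
      have := (pow_lt_pow_iff_right₀ (by norm_num : (1:ℝ) < 2)).mp hchain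
      omega
    -- choose the constant
    refine ⟨max C (((2 : ℝ) ^ (g 0)) ^ γ * T 0), fun J => ?_⟩
    rw [hexp J]
    show ((2 : ℝ) ^ J) ^ γ * T J ≤ _
    by_cases hJ : g 0 ≤ J
    · -- find m with g m = J
      obtain ⟨m, hm⟩ := hreach J
      obtain ⟨m', hm'⟩ := stmt6_aux_ivt g J hJ hgstep m hm
      have hCm := hC (2 ^ m') (h2pow m')
      have h2 := hj₀ (2 ^ m') (h2pow m')
      have hbase : ((2 : ℝ) ^ J) ^ γ ≤ (f (2 ^ m')) ^ γ := by
        refine Real.rpow_le_rpow (by positivity) ?_ hγ.le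
        rw [← hm']
        exact h2.1
      have : ((2 : ℝ) ^ J) ^ γ * T J ≤ (f (2 ^ m')) ^ γ * T J :=
        mul_le_mul_of_nonneg_right hbase (hT0 J)
      refine le_trans this (le_trans ?_ (le_max_left _ _))
      have : T J = T (j₀ (2 ^ m')) := by rw [← hm']
      rw [this]
      exact hCm
    · push_neg at hJ
      have h1 : ((2 : ℝ) ^ J) ^ γ ≤ ((2 : ℝ) ^ (g 0)) ^ γ := by
        refine Real.rpow_le_rpow (by positivity) ?_ hγ.le
        exact pow_le_pow_right₀ (by norm_num) (le_of_lt hJ)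
      have h2 : T J ≤ T 0 := hTanti 0 J (Nat.zero_le J)
      refine le_trans ?_ (le_max_right _ _)
      exact mul_le_mul h1 h2 (hT0 J) (by positivity)
  · -- backward direction
    rintro ⟨C, hC⟩
    refine ⟨(2 : ℝ) ^ γ * C, fun n hn => ?_⟩
    have h2 := hj₀ n hn
    have hfn : 0 ≤ f n := (hfpos n hn).le
    have hbase : (f n) ^ γ ≤ ((2 : ℝ) ^ (j₀ n + 1)) ^ γ :=
      Real.rpow_le_rpow hfn h2.2.le hγ.le
    have hsplit : ((2 : ℝ) ^ (j₀ n + 1)) ^ γ = (2 : ℝ) ^ γ * ((2 : ℝ) ^ (j₀ n)) ^ γ := by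
      rw [pow_succ, Real.mul_rpow (by positivity) (by norm_num), mul_comm]
    have hCn := hC (j₀ n)
    rw [hexp (j₀ n)] at hCn
    calc (f n) ^ γ * T (j₀ n)
        ≤ ((2 : ℝ) ^ (j₀ n + 1)) ^ γ * T (j₀ n) :=
          mul_le_mul_of_nonneg_right hbase (hT0 (j₀ n))
      _ = (2 : ℝ) ^ γ * (((2 : ℝ) ^ (j₀ n)) ^ γ * T (j₀ n)) := by rw [hsplit]; ring
      _ ≤ (2 : ℝ) ^ γ * C := by
          refine mul_le_mul_of_nonneg_left hCn ?_
          positivity
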